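/- Let v be a valuation on a field K with value group Γ, and let μ be a valuation on K[x] extending v, with value group Γ_μ and residue field k_μ (with k the residue field of v). Then the Abhyankar inequality holds: rr(Γ_μ/Γ) + trdeg(k_μ/k) ≤ 1, where rr denotes the rational rank (the ℚ-dimension of the tensor product with ℚ). -/

import Mathlib

open Polynomial

section Preamble

variable {Λ : Type*} [AddCommGroup Λ] [LinearOrder Λ] [IsOrderedAddMonoid Λ]

/-- A (Krull) valuation on a commutative ring, written additively, with value `⊤` at `0`. -/
def IsVal {R : Type*} [CommRing R] (μ : R → WithTop Λ) : Prop :=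
  μ 0 = ⊤ ∧ μ 1 = 0 ∧ (∀ a b, μ (a * b) = μ a + μ b) ∧ ∀ a b, min (μ a) (μ b) ≤ μ (a + b)

variable {K : Type*} [Field K]

/-- `μ` is a valuation on `K[x]` whose restriction to `K` is `v`. -/
def ExtendsVal (v : K → WithTop Λ) (μ : Polynomial K → WithTop Λ) : Prop :=
  ∀ a : K, μ (Polynomial.C a) = v a

/-- `a ∼_μ b`: the initial terms of `a` and `b` in the graded algebra of `μ` coincide. -/
def MuEquiv (μ : Polynomial K → WithTop Λ) (a b : Polynomial K) : Prop :=
  (μ a = μ b ∧ μ a < μ (a - b)) ∨ (μ a = ⊤ ∧ μ b = ⊤)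

/-- `h ∣_μ g` : the initial term of `h` divides the initial term of `g` in the
graded algebra `G_μ`. -/
def MuDvd (μ : Polynomial K → WithTop Λ) (h g : Polynomial K) : Prop :=
  ∃ c, MuEquiv μ (h * c) g

/-- `g` is `μ`-minimal: `g ∤_μ f` for all nonzero `f` of degree smaller than `deg g`. -/
def MuMinimal (μ : Polynomial K → WithTop Λ) (g : Polynomial K) : Prop :=
  ∀ f : Polynomial K, f ≠ 0 → f.degree < g.degree → ¬ MuDvd μ g f

/-- `g` is `μ`-irreducible: the principal ideal of `G_μ` generated by the initial term of `g`
is a nonzero prime ideal. -/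
def MuIrreducible (μ : Polynomial K → WithTop Λ) (g : Polynomial K) : Prop :=
  μ g ≠ ⊤ ∧ ¬ MuDvd μ g 1 ∧ ∀ a b : Polynomial K, MuDvd μ g (a * b) → MuDvd μ g a ∨ MuDvd μ g b

/-- A (MacLane–Vaquié) key polynomial for `μ`: monic, `μ`-minimal and `μ`-irreducible. -/
def IsKeyPol (μ : Polynomial K → WithTop Λ) (φ : Polynomial K) : Prop :=
  φ.Monic ∧ MuMinimal μ φ ∧ MuIrreducible μ φ

/-- A key polynomial for `μ` of minimal degree. -/
def MinKeyPol (μ : Polynomial K → WithTop Λ) (φ : Polynomial K) : Prop :=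
  IsKeyPol μ φ ∧ ∀ ψ : Polynomial K, IsKeyPol μ ψ → φ.degree ≤ ψ.degree

/-- The coefficients of the `g`-adic expansion `f = ∑ a_s g^s`, `deg a_s < deg g`. -/
noncomputable def adicCoeff (g : Polynomial K) : Polynomial K → ℕ → Polynomial K
  | f, 0 => f %ₘ g
  | f, (s + 1) => adicCoeff g (f /ₘ g) s

/-- The truncation `μ_g` of `μ` : `μ_g (∑ a_s g^s) = min_s μ (a_s g^s)`. -/
noncomputable def truncVal (μ : Polynomial K → WithTop Λ) (g f : Polynomial K) : WithTop Λ :=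
  (Finset.range (f.natDegree + 1)).inf fun s => μ (adicCoeff g f s * g ^ s)

/-- The augmented valuation `[μ; φ, γ]`, acting on `φ`-expansions by
`ν(∑ a_s φ^s) = min_s (μ(a_s) + s γ)`. -/
noncomputable def augVal (μ : Polynomial K → WithTop Λ) (φ : Polynomial K) (γ : WithTop Λ)
    (f : Polynomial K) : WithTop Λ :=
  (Finset.range (f.natDegree + 1)).inf fun s => μ (adicCoeff φ f s) + s • γ

end Preamble

section Abhyankar

open TensorProduct

variable {Λ : Type*} [AddCommGroup Λ] [LinearOrder Λ] [IsOrderedAddMonoid Λ]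

theorem IsVal.neg_eq {R : Type*} [CommRing R] {w : R → WithTop Λ} (hw : IsVal w) (a : R) :
    w (-a) = w a := by
  have hm1 : w (-1 : R) + w (-1 : R) = 0 := by
    have h := hw.2.2.1 (-1 : R) (-1 : R)
    rw [neg_mul_neg, one_mul, hw.2.1] at h
    exact h.symm
  have h0 : w (-1 : R) = 0 := by
    rcases eq_or_ne (w (-1 : R)) ⊤ with h | h
    · rw [h] at hm1; simp at hm1
    · obtain ⟨x, hx⟩ := WithTop.ne_top_iff_exists.mp h
      rw [← hx] at hm1 ⊢
      have hxx : x + x = 0 := by exact_mod_cast hm1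
      have hx0 : x = 0 := by
        rcases lt_trichotomy x 0 with h1 | h1 | h1
        · have := add_lt_add h1 h1
          rw [hxx, add_zero] at this
          exact absurd this (lt_irrefl 0).elim
        · exact h1
        · have := add_lt_add h1 h1
          rw [hxx, zero_add] at this
          exact absurd this (lt_irrefl _).elim
      rw [hx0]; rfl
  calc w (-a) = w ((-1) * a) := by rw [neg_one_mul]
    _ = w (-1 : R) + w a := hw.2.2.1 _ _
    _ = w a := by rw [h0, zero_add]

/-- The valuation ring of a valuation `w` on a commutative ring. -/
def valSubring {R : Type*} [CommRing R] (w : R → WithTop Λ) (hw : IsVal w) : Subring R where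
  carrier := {a | 0 ≤ w a}
  zero_mem' := by show (0 : WithTop Λ) ≤ w 0; rw [hw.1]; exact le_top
  one_mem' := by show (0 : WithTop Λ) ≤ w 1; rw [hw.2.1]
  add_mem' := fun {a b} ha hb => le_trans (le_min ha hb) (hw.2.2.2 a b)
  mul_mem' := fun {a b} ha hb => by
    show (0 : WithTop Λ) ≤ w (a * b); rw [hw.2.2.1]; exact add_nonneg ha hb
  neg_mem' := fun {a} ha => by
    show (0 : WithTop Λ) ≤ w (-a); rw [hw.neg_eq]; exact ha

/-- The maximal ideal of the valuation ring of `w`. -/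
def valIdeal {R : Type*} [CommRing R] (w : R → WithTop Λ) (hw : IsVal w) :
    Ideal (valSubring w hw) where
  carrier := {a | 0 < w (a : R)}
  zero_mem' := by
    show (0 : WithTop Λ) < w ((0 : valSubring w hw) : R)
    rw [show ((0 : valSubring w hw) : R) = 0 from rfl, hw.1, ← WithTop.coe_zero]
    exact WithTop.coe_lt_top 0
  add_mem' := fun {a b} ha hb => lt_of_lt_of_le (lt_min ha hb) (hw.2.2.2 _ _)
  smul_mem' := fun c a ha => by
    show (0 : WithTop Λ) < w ((c * a : valSubring w hw) : R)
    rw [show ((c * a : valSubring w hw) : R) = (c : R) * (a : R) from rfl, hw.2.2.1]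
    exact lt_of_lt_of_le ha (le_add_of_nonneg_left c.2)

/-- The residue field (residue ring) of a valuation `w`. -/
def resField {R : Type*} [CommRing R] (w : R → WithTop Λ) (hw : IsVal w) : Type _ :=
  valSubring w hw ⧸ valIdeal w hw

noncomputable instance {R : Type*} [CommRing R] (w : R → WithTop Λ) (hw : IsVal w) :
    CommRing (resField w hw) :=
  inferInstanceAs (CommRing (valSubring w hw ⧸ valIdeal w hw))

/-- The map induced between residue fields by a ring homomorphism compatible with the
valuations. -/
noncomputable def residueMap {R S : Type*} [CommRing R] [CommRing S]
    (v : R → WithTop Λ) (hv : IsVal v) (w : S → WithTop Λ) (hw : IsVal w)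
    (ι : R →+* S) (hc : ∀ a : R, w (ι a) = v a) :
    resField v hv →+* resField w hw :=
  Ideal.Quotient.lift (valIdeal v hv)
    ((Ideal.Quotient.mk (valIdeal w hw)).comp
      (RingHom.codRestrict (ι.comp (valSubring v hv).subtype) (valSubring w hw)
        (fun x => by show (0 : WithTop Λ) ≤ w (ι (x : R)); rw [hc]; exact x.2)))
    (fun a ha => by
      show Ideal.Quotient.mk (valIdeal w hw) _ = 0
      rw [Ideal.Quotient.eq_zero_iff_mem]
      show (0 : WithTop Λ) < w (ι (a : R))
      rw [hc]; exact ha)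

/-- The transcendence degree of an algebra: the supremum of the cardinalities of
algebraically independent subsets. -/
noncomputable def trdeg' (R A : Type*) [CommRing R] [CommRing A] [Algebra R A] : Cardinal :=
  ⨆ s : {s : Set A // AlgebraicIndependent R ((↑) : s → A)}, Cardinal.mk s.1

section MyAux

variable {Λ : Type*} [AddCommGroup Λ] [LinearOrder Λ] [IsOrderedAddMonoid Λ]

namespace IsVal

variable {R : Type*} [CommRing R] {w : R → WithTop Λ}

theorem map_zero (hw : IsVal w) : w 0 = ⊤ := hw.1
theorem map_one (hw : IsVal w) : w 1 = 0 := hw.2.1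
theorem map_mul (hw : IsVal w) (a b : R) : w (a * b) = w a + w b := hw.2.2.1 a b
theorem map_add (hw : IsVal w) (a b : R) : min (w a) (w b) ≤ w (a + b) := hw.2.2.2 a b

theorem pow_coe (hw : IsVal w) {x : R} {γ : Λ} (hx : w x = (γ : WithTop Λ)) (n : ℕ) :
    w (x ^ n) = ((n • γ : Λ) : WithTop Λ) := by
  induction n with
  | zero => simpa using hw.map_one
  | succ n ih =>
      rw [pow_succ, hw.map_mul, ih, hx, ← WithTop.coe_add, succ_nsmul]

theorem inf_le_sum (hw : IsVal w) {ι : Type*} (S : Finset ι) (F : ι → R) :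
    S.inf (fun i => w (F i)) ≤ w (∑ i ∈ S, F i) := by
  classical
  induction S using Finset.cons_induction with
  | empty => simp [hw.map_zero]
  | cons a S ha ih =>
      rw [Finset.sum_cons, Finset.inf_cons]
      refine le_trans ?_ (hw.map_add _ _)
      exact le_min inf_le_left (le_trans inf_le_right ih)

theorem add_left (hw : IsVal w) {x y : R} (hxy : w x < w y) : w (x + y) = w x := by
  refine le_antisymm ?_ ?_
  · by_contra hc
    push_neg at hc
    have h1 : w x = w ((x + y) + (-y)) := by ring_nf
    have h2 : min (w (x + y)) (w (-y)) ≤ w ((x + y) + (-y)) := hw.map_add _ _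
    rw [← h1, hw.neg_eq] at h2
    have : w x < min (w (x + y)) (w y) := lt_min hc hxy
    exact absurd (lt_of_lt_of_le this h2) (lt_irrefl _)
  · have := hw.map_add x y
    rwa [min_eq_left hxy.le] at this

theorem sum_strict_min (hw : IsVal w) {ι : Type*} [DecidableEq ι] {S : Finset ι} {F : ι → R}
    {i0 : ι} (h0 : i0 ∈ S) (htop : w (F i0) ≠ ⊤)
    (hlt : ∀ i ∈ S, i ≠ i0 → w (F i0) < w (F i)) :
    w (∑ i ∈ S, F i) = w (F i0) := by
  rw [← Finset.add_sum_erase _ _ h0]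
  rcases (S.erase i0).eq_empty_or_nonempty with he | he
  · simp [he]
  · apply hw.add_left
    refine lt_of_lt_of_le ?_ (hw.inf_le_sum _ _)
    rw [Finset.lt_inf_iff (lt_top_iff_ne_top.mpr htop)]
    intro i hi
    exact hlt i (Finset.mem_of_mem_erase hi) (Finset.ne_of_mem_erase hi)

theorem ne_top_of_field {F : Type*} [Field F] {w : F → WithTop Λ} (hw : IsVal w) {x : F}
    (hx : x ≠ 0) : w x ≠ ⊤ := by
  intro h
  have h2 := hw.map_mul x x⁻¹
  rw [mul_inv_cancel₀ hx, hw.map_one, h, top_add] at h2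
  exact (WithTop.top_ne_zero (α := Λ)) h2.symm

theorem inv_coe {F : Type*} [Field F] {w : F → WithTop Λ} (hw : IsVal w) {x : F} {γ : Λ}
    (hx : w x = (γ : WithTop Λ)) : w x⁻¹ = ((-γ : Λ) : WithTop Λ) := by
  have hx0 : x ≠ 0 := by
    intro h; rw [h, hw.map_zero] at hx; exact (WithTop.top_ne_coe hx).elim
  have h2 := hw.map_mul x x⁻¹
  rw [mul_inv_cancel₀ hx0, hw.map_one, hx] at h2
  rcases eq_or_ne (w x⁻¹) ⊤ with h | h
  · rw [h, add_top] at h2; exact absurd h2.symm (by simp)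
  · obtain ⟨δ, hδ⟩ := WithTop.ne_top_iff_exists.mp h
    rw [← hδ, ← WithTop.coe_add] at h2
    have : γ + δ = 0 := by exact_mod_cast h2.symm
    rw [← hδ]
    rw [eq_neg_of_add_eq_zero_right this]

theorem ne_zero_of_coe {F : Type*} [Field F] {w : F → WithTop Λ} (hw : IsVal w) {x : F} {γ : Λ}
    (hx : w x = (γ : WithTop Λ)) : x ≠ 0 := by
  intro h; rw [h, hw.map_zero] at hx; exact (WithTop.top_ne_coe hx).elim

end IsVal

end MyAux

section MyRank

open TensorProduct

variable {Q : Type*} [AddCommGroup Q]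

theorem myTmul_mem_span (t : ℚ ⊗[ℤ] Q) :
    t ∈ Submodule.span ℚ {u : ℚ ⊗[ℤ] Q | ∃ q : Q, u = (1 : ℚ) ⊗ₜ[ℤ] q} := by
  have h1 : t ∈ Submodule.span ℤ {u : ℚ ⊗[ℤ] Q | ∃ m n, m ⊗ₜ n = u} := by
    induction t using TensorProduct.induction_on with
    | zero => exact Submodule.zero_mem _
    | tmul m n => exact Submodule.subset_span ⟨m, n, rfl⟩
    | add a b ha hb => exact Submodule.add_mem _ ha hb
  refine Submodule.span_induction ?_ ?_ ?_ ?_ h1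
  · rintro _ ⟨m, q, rfl⟩
    have : m ⊗ₜ[ℤ] q = m • ((1 : ℚ) ⊗ₜ[ℤ] q) := by
      rw [TensorProduct.smul_tmul', smul_eq_mul, mul_one]
    rw [this]
    exact Submodule.smul_mem _ _ (Submodule.subset_span ⟨q, rfl⟩)
  · exact Submodule.zero_mem _
  · intro a b _ _ ha hb; exact Submodule.add_mem _ ha hb
  · intro n a _ ha
    have : n • a = (n : ℚ) • a := (Int.cast_smul_eq_zsmul ℚ n a).symm
    rw [this]
    exact Submodule.smul_mem _ _ ha

theorem myTmul_zero_of_torsion {x : Q} {n : ℤ} (hn : n ≠ 0) (h : n • x = 0) :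
    (1 : ℚ) ⊗ₜ[ℤ] x = (0 : ℚ ⊗[ℤ] Q) := by
  have hq : (n : ℚ) ≠ 0 := Int.cast_ne_zero.mpr hn
  have h2 : ((n : ℚ)) • ((1 : ℚ) ⊗ₜ[ℤ] x) = (0 : ℚ ⊗[ℤ] Q) := by
    rw [Int.cast_smul_eq_zsmul, ← TensorProduct.tmul_smul, h, TensorProduct.tmul_zero]
  have h3 : (1 : ℚ) ⊗ₜ[ℤ] x = ((n : ℚ))⁻¹ • (((n : ℚ)) • ((1 : ℚ) ⊗ₜ[ℤ] x)) := by
    rw [smul_smul, inv_mul_cancel₀ hq, one_smul]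
  rw [h3, h2, smul_zero]

theorem myRank_le_one_of_dep
    (h : ∀ x y : Q, ∃ a b : ℤ, ¬(a = 0 ∧ b = 0) ∧ a • x + b • y = 0) :
    Module.rank ℚ (ℚ ⊗[ℤ] Q) ≤ 1 := by
  rw [rank_le_one_iff]
  by_cases h0 : ∀ q : Q, (1 : ℚ) ⊗ₜ[ℤ] q = (0 : ℚ ⊗[ℤ] Q)
  · refine ⟨0, fun t => ⟨0, ?_⟩⟩
    have hs : {u : ℚ ⊗[ℤ] Q | ∃ q : Q, u = (1 : ℚ) ⊗ₜ[ℤ] q} ⊆ {(0 : ℚ ⊗[ℤ] Q)} := by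
      rintro _ ⟨q, rfl⟩; exact h0 q
    have ht := Submodule.span_mono (R := ℚ) hs (myTmul_mem_span t)
    rw [Submodule.span_zero_singleton] at ht
    rw [Submodule.mem_bot] at ht
    rw [ht, smul_zero]
  · push_neg at h0
    obtain ⟨q0, hq0⟩ := h0
    refine ⟨(1 : ℚ) ⊗ₜ[ℤ] q0, fun t => ?_⟩
    have hgen : {u : ℚ ⊗[ℤ] Q | ∃ q : Q, u = (1 : ℚ) ⊗ₜ[ℤ] q} ⊆
        (Submodule.span ℚ {((1 : ℚ) ⊗ₜ[ℤ] q0 : ℚ ⊗[ℤ] Q)} : Set (ℚ ⊗[ℤ] Q)) := by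
      rintro _ ⟨q, rfl⟩
      obtain ⟨a, b, hab, hrel⟩ := h q0 q
      have key : (a : ℚ) • ((1 : ℚ) ⊗ₜ[ℤ] q0) + (b : ℚ) • ((1 : ℚ) ⊗ₜ[ℤ] q)
          = (0 : ℚ ⊗[ℤ] Q) := by
        rw [Int.cast_smul_eq_zsmul, Int.cast_smul_eq_zsmul, ← TensorProduct.tmul_smul,
          ← TensorProduct.tmul_smul, ← TensorProduct.tmul_add, hrel, TensorProduct.tmul_zero]
      by_cases hb : b = 0
      · have ha : a ≠ 0 := fun h' => hab ⟨h', hb⟩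
        rw [hb] at key
        simp only [Int.cast_zero, zero_smul, add_zero] at key
        rcases smul_eq_zero.mp key with h' | h'
        · exact absurd (Int.cast_injective (by exact_mod_cast h' : ((a:ℚ)) = ((0:ℤ):ℚ))) ha
        · exact absurd h' hq0
      · have hbQ : (b : ℚ) ≠ 0 := Int.cast_ne_zero.mpr hb
        refine Submodule.mem_span_singleton.mpr ⟨-(a : ℚ) / (b : ℚ), ?_⟩
        have h2 : (b : ℚ) • ((1 : ℚ) ⊗ₜ[ℤ] q) = -((a : ℚ) • ((1 : ℚ) ⊗ₜ[ℤ] q0)) := by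
          rw [eq_neg_iff_add_eq_zero, add_comm]; exact key
        calc (-(a : ℚ) / (b : ℚ)) • ((1 : ℚ) ⊗ₜ[ℤ] q0)
            = (b : ℚ)⁻¹ • ((-(a : ℚ)) • ((1 : ℚ) ⊗ₜ[ℤ] q0)) := by
              rw [smul_smul, div_eq_inv_mul]
          _ = (b : ℚ)⁻¹ • ((b : ℚ) • ((1 : ℚ) ⊗ₜ[ℤ] q)) := by rw [neg_smul, ← h2]
          _ = (1 : ℚ) ⊗ₜ[ℤ] q := by rw [smul_smul, inv_mul_cancel₀ hbQ, one_smul]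
    have ht := Submodule.span_mono (R := ℚ) hgen (myTmul_mem_span t)
    rw [Submodule.span_eq] at ht
    exact Submodule.mem_span_singleton.mp ht

theorem myExists_nontorsion (h : Module.rank ℚ (ℚ ⊗[ℤ] Q) ≠ 0) :
    ∃ x : Q, ∀ n : ℤ, n ≠ 0 → n • x ≠ 0 := by
  by_contra hc
  push_neg at hc
  apply h
  have h0 : ∀ q : Q, (1 : ℚ) ⊗ₜ[ℤ] q = (0 : ℚ ⊗[ℤ] Q) := by
    intro q
    obtain ⟨n, hn, hnq⟩ := hc q
    exact myTmul_zero_of_torsion hn hnq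
  have hz : ∀ t : ℚ ⊗[ℤ] Q, t = 0 := by
    intro t
    have hs : {u : ℚ ⊗[ℤ] Q | ∃ q : Q, u = (1 : ℚ) ⊗ₜ[ℤ] q} ⊆ {(0 : ℚ ⊗[ℤ] Q)} := by
      rintro _ ⟨q, rfl⟩; exact h0 q
    have ht := Submodule.span_mono (R := ℚ) hs (myTmul_mem_span t)
    rw [Submodule.span_zero_singleton, Submodule.mem_bot] at ht
    exact ht
  have : Subsingleton (ℚ ⊗[ℤ] Q) := ⟨fun a b => by rw [hz a, hz b]⟩
  exact rank_subsingleton' ℚ (ℚ ⊗[ℤ] Q)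

end MyRank


section MyHelpers

theorem mySubHelper2 {A : Type*} [AddCommGroup A] {x1 x2 d1 d2 : A}
    (h : d1 + x1 = d2 + x2) : d2 - d1 = x1 - x2 := by
  rw [sub_eq_sub_iff_add_eq_add, add_comm x1 d1]
  exact h.symm

theorem mySubHelper3 {A : Type*} [AddCommGroup A] {x1 x2 y1 y2 d1 d2 : A}
    (h : d1 + x1 + y1 = d2 + x2 + y2) : d2 - d1 = (x1 - x2) + (y1 - y2) := by
  have h2 : d2 = d1 + x1 + y1 - x2 - y2 := by
    rw [eq_sub_iff_add_eq, eq_sub_iff_add_eq, add_right_comm]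
    exact h.symm
  rw [h2]; abel

end MyHelpers

section MySetting

variable {Λ' : Type*} [AddCommGroup Λ'] [LinearOrder Λ'] [IsOrderedAddMonoid Λ']

/-- The value group of a valuation on a field, as a subgroup of `Λ'`. -/
def myValGroup {F : Type*} [Field F] (w : F → WithTop Λ') (hw : IsVal w) : AddSubgroup Λ' where
  carrier := {γ : Λ' | ∃ a : F, w a = (γ : WithTop Λ')}
  zero_mem' := ⟨1, by rw [hw.map_one, WithTop.coe_zero]⟩
  add_mem' := by
    rintro a b ⟨x, hx⟩ ⟨y, hy⟩
    exact ⟨x * y, by rw [hw.map_mul, hx, hy, WithTop.coe_add]⟩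
  neg_mem' := by rintro a ⟨x, hx⟩; exact ⟨x⁻¹, hw.inv_coe hx⟩

theorem myMem_closure_val_iff {F : Type*} [Field F] {w : F → WithTop Λ'} (hw : IsVal w)
    (δ : Λ') :
    δ ∈ AddSubgroup.closure {γ : Λ' | ∃ a : F, w a = (γ : WithTop Λ')} ↔
      ∃ a : F, w a = (δ : WithTop Λ') := by
  constructor
  · intro h
    have hle : AddSubgroup.closure {γ : Λ' | ∃ a : F, w a = (γ : WithTop Λ')} ≤
        myValGroup w hw := by
      rw [AddSubgroup.closure_le]
      exact fun γ hγ => hγ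
    exact hle h
  · exact fun h => AddSubgroup.subset_closure h

/-- The residue map as a ring homomorphism. -/
noncomputable def resHom {F : Type*} [CommRing F] (w : F → WithTop Λ') (hw : IsVal w) :
    valSubring w hw →+* resField w hw := Ideal.Quotient.mk (valIdeal w hw)

theorem resHom_surjective {F : Type*} [CommRing F] (w : F → WithTop Λ') (hw : IsVal w) :
    Function.Surjective (resHom w hw) := Ideal.Quotient.mk_surjective

theorem resHom_eq_zero_iff {F : Type*} [CommRing F] {w : F → WithTop Λ'} (hw : IsVal w)
    (x : valSubring w hw) :
    resHom w hw x = 0 ↔ (0 : WithTop Λ') < w (x : F) :=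
  Ideal.Quotient.eq_zero_iff_mem

theorem myResOne_ne_zero {F : Type*} [CommRing F] {w : F → WithTop Λ'} (hw : IsVal w) :
    (1 : resField w hw) ≠ 0 := by
  intro h
  have h1 : resHom w hw 1 = 0 := by rw [map_one]; exact h
  have h2 := (resHom_eq_zero_iff hw 1).mp h1
  rw [OneMemClass.coe_one, hw.map_one] at h2
  exact lt_irrefl _ h2

variable {K L : Type*} [Field K] [Field L]

theorem myRealize {μ : Polynomial K → WithTop Λ'} {μbar : L → WithTop Λ'}
    (hμbar : IsVal μbar) {π : Polynomial K →+* L}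
    (hcomp : ∀ f : Polynomial K, μbar (π f) = μ f) {γ : Λ'}
    (hγ : γ ∈ AddSubgroup.closure {γ : Λ' | ∃ f : Polynomial K, μ f = (γ : WithTop Λ')}) :
    ∃ z : L, μbar z = (γ : WithTop Λ') := by
  have hle : AddSubgroup.closure {γ : Λ' | ∃ f : Polynomial K, μ f = (γ : WithTop Λ')} ≤
      myValGroup μbar hμbar := by
    rw [AddSubgroup.closure_le]
    rintro γ ⟨f, hf⟩
    exact ⟨π f, by rw [hcomp, hf]⟩
  exact hle hγ

variable {v : K → WithTop Λ'} {μbar : L → WithTop Λ'}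

/-- Key residue computation: the value of `∑ ι'(d j) Z^j` where `Z` has residue
transcendental over the residue field of `v` is `min v (d j)`. -/
theorem myResidueSum (hv : IsVal v) (hμbar : IsVal μbar) {ι' : K →+* L}
    (hι : ∀ a : K, μbar (ι' a) = v a)
    [Algebra (resField v hv) (resField μbar hμbar)]
    (halg : ∀ (a : valSubring v hv) (h : (0:WithTop Λ') ≤ μbar (ι' (a : K))),
      algebraMap (resField v hv) (resField μbar hμbar) (resHom v hv a)
        = resHom μbar hμbar ⟨ι' (a : K), h⟩)
    (Z : valSubring μbar hμbar) (hZ : μbar (Z : L) = ((0 : Λ') : WithTop Λ'))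
    (ht : Transcendental (resField v hv) (resHom μbar hμbar Z))
    {n : ℕ} (d : Fin n → K) {j0 : Fin n} (hj0 : d j0 ≠ 0)
    (hmin : ∀ j, d j ≠ 0 → v (d j0) ≤ v (d j)) :
    μbar (∑ j : Fin n, ι' (d j) * (Z : L) ^ (j : ℕ)) = v (d j0) := by
  classical
  obtain ⟨m0, hm0⟩ := WithTop.ne_top_iff_exists.mp (hv.ne_top_of_field hj0)
  set e : Fin n → K := fun j => d j * (d j0)⁻¹ with he
  have he_nonneg : ∀ j, (0 : WithTop Λ') ≤ v (e j) := by
    intro j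
    by_cases hdj : d j = 0
    · rw [he]; simp only [hdj, zero_mul, hv.map_zero]; exact le_top
    · have h1 : v (d j0) + ((-m0 : Λ') : WithTop Λ') ≤ v (d j) + ((-m0 : Λ') : WithTop Λ') :=
        add_le_add_left (hmin j hdj) _
      rw [← hm0, ← WithTop.coe_add, add_neg_cancel, WithTop.coe_zero] at h1
      rw [he]
      rw [hv.map_mul, hv.inv_coe hm0.symm]
      exact h1
  have hE : ∀ j, (0 : WithTop Λ') ≤ μbar (ι' (e j)) := fun j => by rw [hι]; exact he_nonneg j
  set E : Fin n → valSubring μbar hμbar := fun j => ⟨ι' (e j), hE j⟩ with hEdef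
  set U : valSubring μbar hμbar := ∑ j : Fin n, E j * Z ^ (j : ℕ) with hUdef
  have hU : (U : L) = ∑ j : Fin n, ι' (e j) * (Z : L) ^ (j : ℕ) := by
    show (valSubring μbar hμbar).subtype U = _
    rw [hUdef, map_sum]
    exact Finset.sum_congr rfl fun j _ => by rw [map_mul, map_pow]; rfl
  set α : Fin n → resField v hv := fun j => resHom v hv ⟨e j, he_nonneg j⟩ with hα
  set P : Polynomial (resField v hv) :=
    ∑ j : Fin n, Polynomial.C (α j) * Polynomial.X ^ (j : ℕ) with hP
  have hres : resHom μbar hμbar U = Polynomial.aeval (resHom μbar hμbar Z) P := by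
    rw [hUdef, hP, map_sum, map_sum]
    refine Finset.sum_congr rfl fun j _ => ?_
    rw [map_mul, map_pow, map_mul, map_pow, Polynomial.aeval_C, Polynomial.aeval_X]
    rw [halg ⟨e j, he_nonneg j⟩ (hE j)]
  have hαj0 : α j0 = 1 := by
    have h1 : (⟨e j0, he_nonneg j0⟩ : valSubring v hv) = 1 := by
      apply Subtype.ext
      show e j0 = 1
      rw [he]
      exact mul_inv_cancel₀ hj0
    rw [hα]
    show resHom v hv _ = 1
    rw [h1, map_one]
  have hPcoeff : P.coeff (j0 : ℕ) = 1 := by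
    rw [hP, Polynomial.finset_sum_coeff]
    rw [Finset.sum_eq_single j0]
    · rw [Polynomial.coeff_C_mul, Polynomial.coeff_X_pow, if_pos rfl, mul_one, hαj0]
    · intro b _ hb
      rw [Polynomial.coeff_C_mul, Polynomial.coeff_X_pow,
        if_neg (fun h => hb (Fin.val_injective h).symm), mul_zero]
    · intro h; exact absurd (Finset.mem_univ j0) h
  have hPne : P ≠ 0 := fun h => by
    rw [h, Polynomial.coeff_zero] at hPcoeff
    exact myResOne_ne_zero hv hPcoeff.symm
  have haev : Polynomial.aeval (resHom μbar hμbar Z) P ≠ 0 := fun h => ht ⟨P, hPne, h⟩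
  have hUres : resHom μbar hμbar U ≠ 0 := by rw [hres]; exact haev
  have hU0 : μbar (U : L) = 0 := by
    have hle : μbar (U : L) ≤ 0 := not_lt.mp fun h => hUres ((resHom_eq_zero_iff hμbar U).mpr h)
    exact le_antisymm hle U.2
  have hfact : (∑ j : Fin n, ι' (d j) * (Z : L) ^ (j : ℕ)) = ι' (d j0) * (U : L) := by
    rw [hU, Finset.mul_sum]
    refine Finset.sum_congr rfl fun j _ => ?_
    rw [← mul_assoc, ← map_mul]
    congr 2
    show d j = d j0 * (d j * (d j0)⁻¹)
    rw [mul_comm (d j), ← mul_assoc, mul_inv_cancel₀ hj0, one_mul]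
  rw [hfact, hμbar.map_mul, hι, hU0, add_zero]

theorem myCaseVR (hv : IsVal v) (hμbar : IsVal μbar) {ι' : K →+* L}
    (hι : ∀ a : K, μbar (ι' a) = v a)
    [Algebra (resField v hv) (resField μbar hμbar)]
    (halg : ∀ (a : valSubring v hv) (h : (0:WithTop Λ') ≤ μbar (ι' (a : K))),
      algebraMap (resField v hv) (resField μbar hμbar) (resHom v hv a)
        = resHom μbar hμbar ⟨ι' (a : K), h⟩)
    {γ1 : Λ'} {z1 : L} (hz1 : μbar z1 = (γ1 : WithTop Λ'))
    (hind : ∀ m : ℤ, m ≠ 0 → ¬∃ x : K, v x = ((m • γ1 : Λ') : WithTop Λ'))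
    (Z : valSubring μbar hμbar) (hZ : μbar (Z : L) = ((0 : Λ') : WithTop Λ'))
    (ht : Transcendental (resField v hv) (resHom μbar hμbar Z))
    {n : ℕ} (c : Fin n × Fin n → K) (hcne : ∃ p, c p ≠ 0)
    (hrel : ∑ p : Fin n × Fin n, ι' (c p) * z1 ^ (p.1 : ℕ) * (Z : L) ^ (p.2 : ℕ) = 0) :
    False := by
  classical
  set w : Fin n → L := fun i => ∑ j : Fin n, ι' (c (i, j)) * (Z : L) ^ (j : ℕ) with hw
  have hgroup : ∑ i : Fin n, z1 ^ (i : ℕ) * w i = 0 := by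
    rw [← hrel, Fintype.sum_prod_type]
    refine Finset.sum_congr rfl fun i _ => ?_
    rw [hw, Finset.mul_sum]
    exact Finset.sum_congr rfl fun j _ => by ring
  set I : Finset (Fin n) := Finset.univ.filter (fun i => ∃ j, c (i, j) ≠ 0) with hI
  have hInem : I.Nonempty := by
    obtain ⟨p, hp⟩ := hcne
    exact ⟨p.1, by rw [hI, Finset.mem_filter]; exact ⟨Finset.mem_univ _, ⟨p.2, hp⟩⟩⟩
  have hsum : ∑ i ∈ I, z1 ^ (i : ℕ) * w i = 0 := by
    rw [← hgroup]
    apply Finset.sum_subset (Finset.subset_univ I)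
    intro i _ hiI
    have hz : ∀ j, c (i, j) = 0 := by
      intro j
      by_contra hj
      exact hiI (by rw [hI, Finset.mem_filter]; exact ⟨Finset.mem_univ _, ⟨j, hj⟩⟩)
    have : w i = 0 := by
      rw [hw]
      refine Finset.sum_eq_zero fun j _ => ?_
      rw [hz j, map_zero, zero_mul]
    rw [this, mul_zero]
  have hval : ∀ i ∈ I, ∃ mi : Λ', (∃ a : K, v a = (mi : WithTop Λ')) ∧
      μbar (z1 ^ (i : ℕ) * w i) = (((i : ℕ) • γ1 + mi : Λ') : WithTop Λ') := by
    intro i hi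
    set T : Finset (Fin n) := Finset.univ.filter (fun j => c (i, j) ≠ 0) with hT
    have hTne : T.Nonempty := by
      rw [hI, Finset.mem_filter] at hi
      obtain ⟨j, hj⟩ := hi.2
      exact ⟨j, by rw [hT, Finset.mem_filter]; exact ⟨Finset.mem_univ _, hj⟩⟩
    obtain ⟨j0, hj0T, hj0min⟩ := Finset.exists_min_image T (fun j => v (c (i, j))) hTne
    have hcj0 : c (i, j0) ≠ 0 := (Finset.mem_filter.mp hj0T).2
    have hws : μbar (w i) = v (c (i, j0)) := by
      rw [hw]
      exact myResidueSum hv hμbar hι halg Z hZ ht (fun j => c (i, j)) hcj0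
        (fun j hj => hj0min j (by rw [hT, Finset.mem_filter]; exact ⟨Finset.mem_univ _, hj⟩))
    obtain ⟨mi, hmi⟩ := WithTop.ne_top_iff_exists.mp (hv.ne_top_of_field hcj0)
    refine ⟨mi, ⟨c (i, j0), hmi.symm⟩, ?_⟩
    rw [hμbar.map_mul, hμbar.pow_coe hz1, hws, ← hmi, ← WithTop.coe_add]
  choose m hm1 hm2 using hval
  have hdist : ∀ i ∈ I, ∀ i' ∈ I, i ≠ i' →
      μbar (z1 ^ (i : ℕ) * w i) ≠ μbar (z1 ^ (i' : ℕ) * w i') := by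
    intro i hi i' hi' hne heq
    rw [hm2 i hi, hm2 i' hi'] at heq
    have heqΛ : (i : ℕ) • γ1 + m i hi = (i' : ℕ) • γ1 + m i' hi' := by exact_mod_cast heq
    have hkey : (((i : ℕ) : ℤ) - ((i' : ℕ) : ℤ)) • γ1 = m i' hi' - m i hi := by
      rw [sub_smul, natCast_zsmul, natCast_zsmul]
      have h2 : m i hi + (i : ℕ) • γ1 = m i' hi' + (i' : ℕ) • γ1 := by
        rw [add_comm, add_comm (m i' hi')]; exact heqΛ
      exact (mySubHelper2 h2).symm
    have hmne : (((i : ℕ) : ℤ) - ((i' : ℕ) : ℤ)) ≠ 0 := by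
      rw [sub_ne_zero]
      exact_mod_cast fun h => hne (Fin.val_injective h)
    apply hind _ hmne
    obtain ⟨a, ha⟩ := hm1 i hi
    obtain ⟨a', ha'⟩ := hm1 i' hi'
    have ha0 : a ≠ 0 := hv.ne_zero_of_coe ha
    refine ⟨a' * a⁻¹, ?_⟩
    rw [hv.map_mul, ha', hv.inv_coe ha, ← WithTop.coe_add, hkey, sub_eq_add_neg]
  obtain ⟨i0, hi0I, hi0min⟩ :=
    Finset.exists_min_image I (fun i => μbar (z1 ^ (i : ℕ) * w i)) hInem
  have htop : μbar (z1 ^ (i0 : ℕ) * w i0) ≠ ⊤ := by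
    rw [hm2 i0 hi0I]; exact WithTop.coe_ne_top
  have := hμbar.sum_strict_min hi0I htop (fun i hi hne => lt_of_le_of_ne (hi0min i hi)
    (hdist i0 hi0I i hi (Ne.symm hne)))
  rw [hsum, hμbar.map_zero] at this
  exact htop this.symm

theorem myCaseVV (hv : IsVal v) (hμbar : IsVal μbar) {ι' : K →+* L}
    (hι : ∀ a : K, μbar (ι' a) = v a)
    {γ1 γ2 : Λ'} {z1 z2 : L} (hz1 : μbar z1 = (γ1 : WithTop Λ'))
    (hz2 : μbar z2 = (γ2 : WithTop Λ'))
    (hind : ∀ a b : ℤ, (∃ x : K, v x = ((a • γ1 + b • γ2 : Λ') : WithTop Λ')) →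
      a = 0 ∧ b = 0)
    {n : ℕ} (c : Fin n × Fin n → K) (hcne : ∃ p, c p ≠ 0)
    (hrel : ∑ p : Fin n × Fin n, ι' (c p) * z1 ^ (p.1 : ℕ) * z2 ^ (p.2 : ℕ) = 0) :
    False := by
  classical
  set F : Fin n × Fin n → L := fun p => ι' (c p) * z1 ^ (p.1 : ℕ) * z2 ^ (p.2 : ℕ) with hF
  set S : Finset (Fin n × Fin n) := Finset.univ.filter (fun p => c p ≠ 0) with hS
  have hSne : S.Nonempty := by
    obtain ⟨p, hp⟩ := hcne
    exact ⟨p, by rw [hS, Finset.mem_filter]; exact ⟨Finset.mem_univ _, hp⟩⟩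
  have hsum : ∑ p ∈ S, F p = 0 := by
    rw [← hrel]
    apply Finset.sum_subset (Finset.subset_univ S)
    intro p _ hpS
    have : c p = 0 := by
      by_contra hc
      exact hpS (by rw [hS, Finset.mem_filter]; exact ⟨Finset.mem_univ _, hc⟩)
    rw [hF]
    show ι' (c p) * z1 ^ (p.1:ℕ) * z2 ^ (p.2:ℕ) = 0
    rw [this, map_zero, zero_mul, zero_mul]
  have hval : ∀ p ∈ S, ∃ dp : Λ', v (c p) = (dp : WithTop Λ') ∧
      μbar (F p) = ((dp + (p.1 : ℕ) • γ1 + (p.2 : ℕ) • γ2 : Λ') : WithTop Λ') := by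
    intro p hp
    have hcp : c p ≠ 0 := (Finset.mem_filter.mp hp).2
    obtain ⟨dp, hdp⟩ := WithTop.ne_top_iff_exists.mp (hv.ne_top_of_field hcp)
    refine ⟨dp, hdp.symm, ?_⟩
    rw [hF]
    show μbar (ι' (c p) * z1 ^ (p.1:ℕ) * z2 ^ (p.2:ℕ)) = _
    rw [hμbar.map_mul, hμbar.map_mul, hι, hμbar.pow_coe hz1, hμbar.pow_coe hz2, ← hdp,
      ← WithTop.coe_add, ← WithTop.coe_add]
  choose dl hd1 hd2 using hval
  have hdist : ∀ p ∈ S, ∀ q ∈ S, p ≠ q → μbar (F p) ≠ μbar (F q) := by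
    intro p hp q hq hne heq
    rw [hd2 p hp, hd2 q hq] at heq
    have heqΛ : dl p hp + (p.1 : ℕ) • γ1 + (p.2 : ℕ) • γ2
        = dl q hq + (q.1 : ℕ) • γ1 + (q.2 : ℕ) • γ2 := by exact_mod_cast heq
    have hkey := mySubHelper3 heqΛ
    have h12 := hind (((p.1 : ℕ) : ℤ) - ((q.1 : ℕ) : ℤ)) (((p.2 : ℕ) : ℤ) - ((q.2 : ℕ) : ℤ))
      ?_
    · have h1 : (p.1 : ℕ) = (q.1 : ℕ) := by
        have := sub_eq_zero.mp h12.1; exact_mod_cast this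
      have h2 : (p.2 : ℕ) = (q.2 : ℕ) := by
        have := sub_eq_zero.mp h12.2; exact_mod_cast this
      exact hne (Prod.ext (Fin.val_injective h1) (Fin.val_injective h2))
    · have hcp : c p ≠ 0 := (Finset.mem_filter.mp hp).2
      refine ⟨c q * (c p)⁻¹, ?_⟩
      rw [hv.map_mul, hd1 q hq, hv.inv_coe (hd1 p hp), ← WithTop.coe_add]
      congr 1
      rw [sub_smul, sub_smul, natCast_zsmul, natCast_zsmul, natCast_zsmul, natCast_zsmul]
      rw [← hkey]
      abel
  obtain ⟨p0, hp0S, hp0min⟩ := Finset.exists_min_image S (fun p => μbar (F p)) hSne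
  have htop : μbar (F p0) ≠ ⊤ := by rw [hd2 p0 hp0S]; exact WithTop.coe_ne_top
  have := hμbar.sum_strict_min hp0S htop (fun p hp hne => lt_of_le_of_ne (hp0min p hp)
    (hdist p0 hp0S p hp (Ne.symm hne)))
  rw [hsum, hμbar.map_zero] at this
  exact htop this.symm

theorem myCaseRR (hv : IsVal v) (hμbar : IsVal μbar) {ι' : K →+* L}
    (hι : ∀ a : K, μbar (ι' a) = v a)
    [Algebra (resField v hv) (resField μbar hμbar)]
    (halg : ∀ (a : valSubring v hv) (h : (0:WithTop Λ') ≤ μbar (ι' (a : K))),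
      algebraMap (resField v hv) (resField μbar hμbar) (resHom v hv a)
        = resHom μbar hμbar ⟨ι' (a : K), h⟩)
    (Z1 Z2 : valSubring μbar hμbar)
    {g : Fin 2 → resField μbar hμbar} (hg0 : g 0 = resHom μbar hμbar Z1)
    (hg1 : g 1 = resHom μbar hμbar Z2)
    (hind : AlgebraicIndependent (resField v hv) g)
    {n : ℕ} (c : Fin n × Fin n → K) (hcne : ∃ p, c p ≠ 0)
    (hrel : ∑ p : Fin n × Fin n, ι' (c p) * (Z1 : L) ^ (p.1 : ℕ) * (Z2 : L) ^ (p.2 : ℕ) = 0) :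
    False := by
  classical
  set S : Finset (Fin n × Fin n) := Finset.univ.filter (fun p => c p ≠ 0) with hS
  have hSne : S.Nonempty := by
    obtain ⟨p, hp⟩ := hcne
    exact ⟨p, by rw [hS, Finset.mem_filter]; exact ⟨Finset.mem_univ _, hp⟩⟩
  obtain ⟨p0, hp0S, hp0min⟩ := Finset.exists_min_image S (fun p => v (c p)) hSne
  have hcp0 : c p0 ≠ 0 := (Finset.mem_filter.mp hp0S).2
  obtain ⟨m0, hm0⟩ := WithTop.ne_top_iff_exists.mp (hv.ne_top_of_field hcp0)
  set e : Fin n × Fin n → K := fun p => c p * (c p0)⁻¹ with he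
  have he_nonneg : ∀ p, (0 : WithTop Λ') ≤ v (e p) := by
    intro p
    by_cases hcp : c p = 0
    · rw [he]; simp only [hcp, zero_mul, hv.map_zero]; exact le_top
    · have hpS : p ∈ S := by rw [hS, Finset.mem_filter]; exact ⟨Finset.mem_univ _, hcp⟩
      have h1 : v (c p0) + ((-m0 : Λ') : WithTop Λ') ≤ v (c p) + ((-m0 : Λ') : WithTop Λ') :=
        add_le_add_left (hp0min p hpS) _
      rw [← hm0, ← WithTop.coe_add, add_neg_cancel, WithTop.coe_zero] at h1
      rw [he]
      rw [hv.map_mul, hv.inv_coe hm0.symm]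
      exact h1
  have hE : ∀ p, (0 : WithTop Λ') ≤ μbar (ι' (e p)) := fun p => by rw [hι]; exact he_nonneg p
  set E : Fin n × Fin n → valSubring μbar hμbar := fun p => ⟨ι' (e p), hE p⟩ with hEdef
  set U : valSubring μbar hμbar :=
    ∑ p : Fin n × Fin n, E p * Z1 ^ (p.1 : ℕ) * Z2 ^ (p.2 : ℕ) with hUdef
  have hU : (U : L) = 0 := by
    have : (U : L) = ι' ((c p0)⁻¹) *
        ∑ p : Fin n × Fin n, ι' (c p) * (Z1 : L) ^ (p.1 : ℕ) * (Z2 : L) ^ (p.2 : ℕ) := by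
      show (valSubring μbar hμbar).subtype U = _
      rw [hUdef, map_sum, Finset.mul_sum]
      refine Finset.sum_congr rfl fun p _ => ?_
      rw [map_mul, map_mul, map_pow, map_pow]
      show ι' (c p * (c p0)⁻¹) * (Z1:L) ^ (p.1:ℕ) * (Z2:L) ^ (p.2:ℕ) = _
      rw [map_mul]
      ring
    rw [this, hrel, mul_zero]
  have hres0 : resHom μbar hμbar U = 0 := by
    rw [resHom_eq_zero_iff hμbar U, hU, hμbar.map_zero]
    exact lt_top_iff_ne_top.mpr (fun h => by simp at h)
  set α : Fin n × Fin n → resField v hv := fun p => resHom v hv ⟨e p, he_nonneg p⟩ with hα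
  set q : MvPolynomial (Fin 2) (resField v hv) :=
    ∑ p : Fin n × Fin n, MvPolynomial.C (α p) * MvPolynomial.X 0 ^ (p.1 : ℕ)
      * MvPolynomial.X 1 ^ (p.2 : ℕ) with hq
  have haev : MvPolynomial.aeval g q = resHom μbar hμbar U := by
    rw [hq, hUdef, map_sum, map_sum]
    refine Finset.sum_congr rfl fun p _ => ?_
    rw [map_mul, map_mul, map_pow, map_pow, MvPolynomial.aeval_C, MvPolynomial.aeval_X,
      MvPolynomial.aeval_X, hg0, hg1, map_mul, map_mul, map_pow, map_pow]
    rw [hα]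
    show algebraMap _ _ (resHom v hv ⟨e p, he_nonneg p⟩) * _ * _ = _
    rw [halg ⟨e p, he_nonneg p⟩ (hE p)]
  have hq0 : q = 0 := by
    apply hind
    rw [map_zero, haev]
    exact hres0
  have hmono : ∀ (a : resField v hv) (i j : ℕ),
      MvPolynomial.C a * MvPolynomial.X 0 ^ i * MvPolynomial.X (1 : Fin 2) ^ j
        = MvPolynomial.monomial (Finsupp.single 0 i + Finsupp.single 1 j) a := by
    intro a i j
    rw [MvPolynomial.X_pow_eq_monomial, MvPolynomial.X_pow_eq_monomial, MvPolynomial.C_apply,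
      MvPolynomial.monomial_mul, MvPolynomial.monomial_mul, zero_add, mul_one, mul_one]
  have hexp : ∀ p q' : Fin n × Fin n,
      (Finsupp.single (0 : Fin 2) (p.1 : ℕ) + Finsupp.single 1 (p.2 : ℕ))
        = (Finsupp.single (0 : Fin 2) (q'.1 : ℕ) + Finsupp.single 1 (q'.2 : ℕ)) → p = q' := by
    intro p q' h
    have h0 := DFunLike.congr_fun h (0 : Fin 2)
    have h1 := DFunLike.congr_fun h (1 : Fin 2)
    simp only [Finsupp.add_apply, Finsupp.single_apply, if_pos rfl] at h0 h1
    norm_num at h0 h1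
    exact Prod.ext (Fin.val_injective h0) (Fin.val_injective h1)
  have hcoeff : MvPolynomial.coeff
      (Finsupp.single (0 : Fin 2) (p0.1 : ℕ) + Finsupp.single 1 (p0.2 : ℕ)) q = α p0 := by
    rw [hq]
    rw [MvPolynomial.coeff_sum]
    rw [Finset.sum_eq_single p0]
    · rw [hmono, MvPolynomial.coeff_monomial, if_pos rfl]
    · intro p _ hp
      rw [hmono, MvPolynomial.coeff_monomial, if_neg (fun h => hp (hexp p p0 h))]
    · intro h; exact absurd (Finset.mem_univ p0) h
  have hαp0 : α p0 = 1 := by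
    have h1 : (⟨e p0, he_nonneg p0⟩ : valSubring v hv) = 1 := by
      apply Subtype.ext
      show e p0 = 1
      rw [he]
      exact mul_inv_cancel₀ hcp0
    rw [hα]
    show resHom v hv _ = 1
    rw [h1, map_one]
  rw [hq0, MvPolynomial.coeff_zero, hαp0] at hcoeff
  exact myResOne_ne_zero hv hcoeff.symm

end MySetting


section MyRel

variable {K L : Type*} [Field K] [Field L]

theorem myExistsRel (π : Polynomial K →+* L) {z1 z2 : L} {f1 g1 f2 g2 : Polynomial K}
    (hg1 : π g1 ≠ 0) (hg2 : π g2 ≠ 0) (h1 : z1 * π g1 = π f1) (h2 : z2 * π g2 = π f2) :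
    ∃ (n : ℕ) (c : Fin n × Fin n → K), (∃ p, c p ≠ 0) ∧
      ∑ p : Fin n × Fin n, π (Polynomial.C (c p)) * z1 ^ (p.1 : ℕ) * z2 ^ (p.2 : ℕ) = 0 := by
  classical
  set D : ℕ := f1.natDegree + g1.natDegree + f2.natDegree + g2.natDegree with hD
  set N : ℕ := D + 1 with hN
  set n : ℕ := N + 1 with hn
  set P : Fin n × Fin n → Polynomial K := fun p =>
    f1 ^ (p.1 : ℕ) * g1 ^ (N - (p.1 : ℕ)) * f2 ^ (p.2 : ℕ) * g2 ^ (N - (p.2 : ℕ)) with hP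
  have hdeg : ∀ p : Fin n × Fin n, P p ∈ Polynomial.degreeLT K (N * D + 1) := by
    intro p
    rw [Polynomial.mem_degreeLT]
    have hnd : (P p).natDegree ≤ N * D := by
      have b1 : (f1 ^ (p.1 : ℕ)).natDegree ≤ N * f1.natDegree := by
        refine le_trans (Polynomial.natDegree_pow_le) ?_
        exact Nat.mul_le_mul_right _ (Nat.le_of_lt_succ p.1.isLt)
      have b2 : (g1 ^ (N - (p.1 : ℕ))).natDegree ≤ N * g1.natDegree := by
        refine le_trans (Polynomial.natDegree_pow_le) ?_
        exact Nat.mul_le_mul_right _ (Nat.sub_le _ _)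
      have b3 : (f2 ^ (p.2 : ℕ)).natDegree ≤ N * f2.natDegree := by
        refine le_trans (Polynomial.natDegree_pow_le) ?_
        exact Nat.mul_le_mul_right _ (Nat.le_of_lt_succ p.2.isLt)
      have b4 : (g2 ^ (N - (p.2 : ℕ))).natDegree ≤ N * g2.natDegree := by
        refine le_trans (Polynomial.natDegree_pow_le) ?_
        exact Nat.mul_le_mul_right _ (Nat.sub_le _ _)
      calc (P p).natDegree
          ≤ (f1 ^ (p.1:ℕ) * g1 ^ (N - (p.1:ℕ)) * f2 ^ (p.2:ℕ)).natDegree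
            + (g2 ^ (N - (p.2:ℕ))).natDegree := Polynomial.natDegree_mul_le
        _ ≤ ((f1 ^ (p.1:ℕ) * g1 ^ (N - (p.1:ℕ))).natDegree + (f2 ^ (p.2:ℕ)).natDegree)
            + (g2 ^ (N - (p.2:ℕ))).natDegree := by
              exact Nat.add_le_add_right Polynomial.natDegree_mul_le _
        _ ≤ (((f1 ^ (p.1:ℕ)).natDegree + (g1 ^ (N - (p.1:ℕ))).natDegree)
            + (f2 ^ (p.2:ℕ)).natDegree) + (g2 ^ (N - (p.2:ℕ))).natDegree := by
              exact Nat.add_le_add_right (Nat.add_le_add_right Polynomial.natDegree_mul_le _) _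
        _ ≤ N * f1.natDegree + N * g1.natDegree + N * f2.natDegree + N * g2.natDegree := by
              omega
        _ = N * D := by rw [hD]; ring
    calc (P p).degree ≤ ((P p).natDegree : WithBot ℕ) := Polynomial.degree_le_natDegree
      _ ≤ ((N * D : ℕ) : WithBot ℕ) := by exact_mod_cast hnd
      _ < ((N * D + 1 : ℕ) : WithBot ℕ) := by exact_mod_cast Nat.lt_succ_self _
  have hnotli : ¬ LinearIndependent K P := by
    intro hli
    have hli2 : LinearIndependent K (fun p : Fin n × Fin n =>
        (⟨P p, hdeg p⟩ : Polynomial.degreeLT K (N * D + 1))) := by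
      apply LinearIndependent.of_comp (Polynomial.degreeLT K (N * D + 1)).subtype
      exact hli
    have hfin : Module.Finite K (Polynomial.degreeLT K (N * D + 1)) :=
      Module.Finite.equiv (Polynomial.degreeLTEquiv K (N * D + 1)).symm
    have hcard := hli2.fintype_card_le_finrank
    rw [(Polynomial.degreeLTEquiv K (N * D + 1)).finrank_eq] at hcard
    rw [Module.finrank_pi, Fintype.card_fin] at hcard
    rw [Fintype.card_prod, Fintype.card_fin] at hcard
    have : N * D + 1 < n * n := by
      rw [hn, hN]
      nlinarith
    omega
  rw [Fintype.not_linearIndependent_iff] at hnotli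
  obtain ⟨c, hcsum, i, hci⟩ := hnotli
  refine ⟨n, c, ⟨i, hci⟩, ?_⟩
  have hπ : ∑ p : Fin n × Fin n, π (Polynomial.C (c p) * P p) = 0 := by
    rw [← map_sum]
    have : ∑ p : Fin n × Fin n, Polynomial.C (c p) * P p = 0 := by
      rw [← hcsum]
      exact Finset.sum_congr rfl fun p _ => by rw [Polynomial.smul_eq_C_mul]
    rw [this, map_zero]
  have hexpand : ∀ p : Fin n × Fin n,
      (π (Polynomial.C (c p)) * z1 ^ (p.1:ℕ) * z2 ^ (p.2:ℕ)) * (π g1 ^ N * π g2 ^ N)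
        = π (Polynomial.C (c p) * P p) := by
    intro p
    have e1 : (p.1 : ℕ) + (N - (p.1 : ℕ)) = N := Nat.add_sub_cancel' (Nat.le_of_lt_succ p.1.isLt)
    have e2 : (p.2 : ℕ) + (N - (p.2 : ℕ)) = N := Nat.add_sub_cancel' (Nat.le_of_lt_succ p.2.isLt)
    have hg1N : (π g1) ^ N = (π g1) ^ (p.1:ℕ) * (π g1) ^ (N - (p.1:ℕ)) := by
      rw [← pow_add, e1]
    have hg2N : (π g2) ^ N = (π g2) ^ (p.2:ℕ) * (π g2) ^ (N - (p.2:ℕ)) := by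
      rw [← pow_add, e2]
    rw [hP]
    simp only [map_mul, map_pow]
    rw [← h1, ← h2, mul_pow, mul_pow, hg1N, hg2N]
    ring
  have hkey : (∑ p : Fin n × Fin n, π (Polynomial.C (c p)) * z1 ^ (p.1:ℕ) * z2 ^ (p.2:ℕ))
      * (π g1 ^ N * π g2 ^ N) = 0 := by
    rw [Finset.sum_mul]
    rw [← hπ]
    exact Finset.sum_congr rfl fun p _ => hexpand p
  rcases mul_eq_zero.mp hkey with h | h
  · exact h
  · rcases mul_eq_zero.mp h with h' | h'
    · exact absurd h' (pow_ne_zero _ hg1)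
    · exact absurd h' (pow_ne_zero _ hg2)

end MyRel


/-- the Abhyankar inequality `rr(Γ_μ/Γ) + trdeg(k_μ/k) ≤ 1` for a valuation
`μ` on `K[x]` extending `v`.  Here `L` is the field of fractions of `K[x]/supp(μ)`
(given via a homomorphism `π` with kernel `supp(μ)` whose image generates `L` as a field of
fractions), `μ̄` is the valuation induced by `μ` on `L`, `Γ_μ` and `Γ` are the value groups
of `μ` and `v`, the rational rank is `dim_ℚ (· ⊗ ℚ)`, and `k_μ`, `k` are the residue
fields of `μ̄` and `v`. -/
theorem abhyankar_inequality {K Λ' L : Type} [Field K] [Field L]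
    [AddCommGroup Λ'] [LinearOrder Λ'] [IsOrderedAddMonoid Λ'] (v : K → WithTop Λ') (hv : IsVal v)
    (μ : Polynomial K → WithTop Λ') (hμ : IsVal μ) (hext : ExtendsVal v μ)
    (π : Polynomial K →+* L)
    (hgen : ∀ z : L, ∃ f g : Polynomial K, π g ≠ 0 ∧ z * π g = π f)
    (hker : ∀ f : Polynomial K, π f = 0 ↔ μ f = ⊤)
    (μbar : L → WithTop Λ') (hμbar : IsVal μbar)
    (hcomp : ∀ f : Polynomial K, μbar (π f) = μ f) :
    Module.rank ℚ (ℚ ⊗[ℤ]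
        ((AddSubgroup.closure {γ : Λ' | ∃ f : Polynomial K, μ f = (γ : WithTop Λ')}) ⧸
          ((AddSubgroup.closure {γ : Λ' | ∃ a : K, v a = (γ : WithTop Λ')}).addSubgroupOf
            (AddSubgroup.closure {γ : Λ' | ∃ f : Polynomial K, μ f = (γ : WithTop Λ')})))) +
      @trdeg' (resField v hv) (resField μbar hμbar) _ _
        ((residueMap v hv μbar hμbar (π.comp (Polynomial.C : K →+* Polynomial K))
          (fun a => by rw [RingHom.comp_apply, hcomp, hext a])).toAlgebra) ≤ 1 := by
  classical
  letI algA : Algebra (resField v hv) (resField μbar hμbar) :=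
    (residueMap v hv μbar hμbar (π.comp (Polynomial.C : K →+* Polynomial K))
      (fun a => by rw [RingHom.comp_apply, hcomp, hext a])).toAlgebra
  haveI : Nontrivial (resField v hv) := ⟨⟨1, 0, myResOne_ne_zero hv⟩⟩
  have hι : ∀ a : K, μbar ((π.comp (Polynomial.C : K →+* Polynomial K)) a) = v a :=
    fun a => by rw [RingHom.comp_apply, hcomp, hext a]
  have halg : ∀ (a : valSubring v hv)
      (h : (0 : WithTop Λ') ≤ μbar ((π.comp (Polynomial.C : K →+* Polynomial K)) (a : K))),
      algebraMap (resField v hv) (resField μbar hμbar) (resHom v hv a)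
        = resHom μbar hμbar ⟨(π.comp (Polynomial.C : K →+* Polynomial K)) (a : K), h⟩ :=
    fun a h => rfl
  set Gμ := AddSubgroup.closure {γ : Λ' | ∃ f : Polynomial K, μ f = (γ : WithTop Λ')} with hGμdef
  set N0 := (AddSubgroup.closure {γ : Λ' | ∃ a : K, v a = (γ : WithTop Λ')}).addSubgroupOf Gμ
    with hN0def
  have hreal : ∀ g : Gμ, ∃ z : L, μbar z = ((g : Λ') : WithTop Λ') :=
    fun g => myRealize hμbar hcomp g.2
  have getZ : ∀ t : resField μbar hμbar, Transcendental (resField v hv) t →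
      ∃ Z : valSubring μbar hμbar, resHom μbar hμbar Z = t
        ∧ μbar (Z : L) = ((0 : Λ') : WithTop Λ') := by
    intro t ht
    obtain ⟨Z, hZ⟩ := resHom_surjective μbar hμbar t
    refine ⟨Z, hZ, ?_⟩
    have h1 : (0 : WithTop Λ') ≤ μbar (Z : L) := Z.2
    have h2 : ¬ (0 : WithTop Λ') < μbar (Z : L) := by
      intro h
      have ht0 : t = 0 := by rw [← hZ]; exact (resHom_eq_zero_iff hμbar Z).mpr h
      exact ht ⟨Polynomial.X, Polynomial.X_ne_zero, by rw [Polynomial.aeval_X, ht0]⟩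
    rw [WithTop.coe_zero]
    exact le_antisymm (not_lt.mp h2) h1
  -- the rational rank is at most 1
  have ha1 : Module.rank ℚ (ℚ ⊗[ℤ] (↥Gμ ⧸ N0)) ≤ 1 := by
    apply myRank_le_one_of_dep
    intro x y
    by_contra hcon
    push_neg at hcon
    obtain ⟨gx, rfl⟩ := QuotientAddGroup.mk'_surjective N0 x
    obtain ⟨gy, rfl⟩ := QuotientAddGroup.mk'_surjective N0 y
    obtain ⟨z1, hz1⟩ := hreal gx
    obtain ⟨z2, hz2⟩ := hreal gy
    obtain ⟨F1, G1, hG1, hFG1⟩ := hgen z1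
    obtain ⟨F2, G2, hG2, hFG2⟩ := hgen z2
    obtain ⟨n, c, hcne, hrel⟩ := myExistsRel π hG1 hG2 hFG1 hFG2
    refine myCaseVV hv hμbar hι hz1 hz2 ?_ c hcne hrel
    intro a b hab
    by_contra habne
    refine hcon a b (fun h1 h2 => habne ⟨h1, h2⟩) ?_
    have hmem : a • gx + b • gy ∈ N0 := by
      rw [hN0def, AddSubgroup.mem_addSubgroupOf, myMem_closure_val_iff hv]
      obtain ⟨x0, hx0⟩ := hab
      refine ⟨x0, ?_⟩
      rw [hx0]
      congr 1
    have hq := (QuotientAddGroup.eq_zero_iff _).mpr hmem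
    rw [← map_zsmul (QuotientAddGroup.mk' N0), ← map_zsmul (QuotientAddGroup.mk' N0),
      ← map_add]
    exact hq
  -- any algebraically independent set has at most one element
  have hb1 : ∀ s : Set (resField μbar hμbar),
      AlgebraicIndependent (resField v hv) ((↑) : s → resField μbar hμbar) →
        Cardinal.mk s ≤ 1 := by
    intro s hs
    by_contra hlt
    rw [not_le, Cardinal.one_lt_iff_nontrivial] at hlt
    obtain ⟨x, y, hxy⟩ := hlt.exists_pair_ne
    have hfinj : Function.Injective ![x, y] := by
      intro a b hab
      fin_cases a <;> fin_cases b <;> simp_all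
    have hgind := hs.comp ![x, y] hfinj
    obtain ⟨Z1, hZ1r, hZ1v⟩ := getZ _ (hgind.transcendental 0)
    obtain ⟨Z2, hZ2r, hZ2v⟩ := getZ _ (hgind.transcendental 1)
    obtain ⟨F1, G1, hG1, hFG1⟩ := hgen (Z1 : L)
    obtain ⟨F2, G2, hG2, hFG2⟩ := hgen (Z2 : L)
    obtain ⟨n, c, hcne, hrel⟩ := myExistsRel π hG1 hG2 hFG1 hFG2
    exact myCaseRR hv hμbar hι halg Z1 Z2 hZ1r.symm hZ2r.symm hgind c hcne hrel
  have htr1 : trdeg' (resField v hv) (resField μbar hμbar) ≤ 1 := by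
    refine ciSup_le' ?_
    rintro ⟨s, hs⟩
    exact hb1 s hs
  rcases eq_or_ne (Module.rank ℚ (ℚ ⊗[ℤ] (↥Gμ ⧸ N0))) 0 with hA | hA
  · rw [hA, zero_add]
    exact htr1
  · obtain ⟨x, hx⟩ := myExists_nontorsion hA
    obtain ⟨gx, rfl⟩ := QuotientAddGroup.mk'_surjective N0 x
    obtain ⟨z1, hz1⟩ := hreal gx
    have hind1 : ∀ m : ℤ, m ≠ 0 →
        ¬∃ x0 : K, v x0 = ((m • (gx : Λ') : Λ') : WithTop Λ') := by
      rintro m hm ⟨x0, hx0⟩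
      apply hx m hm
      have hmem : m • gx ∈ N0 := by
        rw [hN0def, AddSubgroup.mem_addSubgroupOf, myMem_closure_val_iff hv]
        refine ⟨x0, ?_⟩
        rw [hx0]
        congr 1
      have hq := (QuotientAddGroup.eq_zero_iff _).mpr hmem
      rw [← map_zsmul (QuotientAddGroup.mk' N0)]
      exact hq
    have hb0 : trdeg' (resField v hv) (resField μbar hμbar) = 0 := by
      refine le_antisymm ?_ zero_le
      refine ciSup_le' ?_
      rintro ⟨s, hs⟩
      rw [le_zero_iff, Cardinal.mk_eq_zero_iff]
      constructor
      rintro ⟨t, ht⟩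
      have htr : Transcendental (resField v hv) t := hs.transcendental ⟨t, ht⟩
      obtain ⟨Z, hZr, hZv⟩ := getZ t htr
      obtain ⟨F1, G1, hG1, hFG1⟩ := hgen z1
      obtain ⟨F2, G2, hG2, hFG2⟩ := hgen (Z : L)
      obtain ⟨n, c, hcne, hrel⟩ := myExistsRel π hG1 hG2 hFG1 hFG2
      exact myCaseVR hv hμbar hι halg hz1 hind1 Z hZv (by rw [hZr]; exact htr) c hcne hrel
    rw [hb0, add_zero]
    exact ha1

end Abhyankar
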